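/- Let S ⊆ ℝ^p be a set such that any linear functional constant on S is zero, i.e., if uᵀx = uᵀx' for all x, x' ∈ S (u ∈ ℝ^p) then u = 0. Let f, f' : ℝ^p → ℝ be positive on S, let θ₁ = (α₁, β₁), θ₂ = (α₂, β₂), and c₁, c₂ ∈ (0,1). Suppose that for every x ∈ S: φ(x, θ₁) f(x)/c₁ = φ(x, θ₂) f'(x)/c₂ and (1 − φ(x, θ₁)) f(x)/(1 − c₁) = (1 − φ(x, θ₂)) f'(x)/(1 − c₂). Then β₁ = β₂. That is, the slope parameter of the logistic model is identifiable from the case and control densities alone, even though the marginal density and intercept are not. -/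

import Mathlib

/-- The logistic function `σ(t) = exp(t)/(1 + exp(t))`. -/
noncomputable def logistic (t : ℝ) : ℝ := Real.exp t / (1 + Real.exp t)

/-- The logistic regression model `φ(x, θ) = σ(α + βᵀx)`. -/
noncomputable def phi (p : ℕ) (α : ℝ) (β : Fin p → ℝ) (x : Fin p → ℝ) : ℝ :=
  logistic (α + ∑ i, β i * x i)

lemma one_sub_logistic (t : ℝ) : 1 - logistic t = 1 / (1 + Real.exp t) := by
  have h : (0:ℝ) < 1 + Real.exp t := by positivity
  rw [logistic, eq_div_iff h.ne', sub_mul, div_mul_cancel₀ _ h.ne']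
  ring

theorem slope_identifiable_from_case_control_densities
    (p : ℕ) (S : Set (Fin p → ℝ))
    (hS : ∀ u : Fin p → ℝ,
      (∀ x ∈ S, ∀ x' ∈ S, (∑ i, u i * x i) = ∑ i, u i * x' i) → u = 0)
    (f f' : (Fin p → ℝ) → ℝ) (hf : ∀ x ∈ S, 0 < f x) (hf' : ∀ x ∈ S, 0 < f' x)
    (α₁ α₂ : ℝ) (β₁ β₂ : Fin p → ℝ) (c₁ c₂ : ℝ)
    (hc₁ : c₁ ∈ Set.Ioo (0 : ℝ) 1) (hc₂ : c₂ ∈ Set.Ioo (0 : ℝ) 1)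
    (hcase : ∀ x ∈ S, phi p α₁ β₁ x * f x / c₁ = phi p α₂ β₂ x * f' x / c₂)
    (hcontrol : ∀ x ∈ S,
      (1 - phi p α₁ β₁ x) * f x / (1 - c₁) = (1 - phi p α₂ β₂ x) * f' x / (1 - c₂)) :
    β₁ = β₂ := by
  obtain ⟨hc₁0, hc₁1⟩ := hc₁
  obtain ⟨hc₂0, hc₂1⟩ := hc₂
  have h1c₁ : (0:ℝ) < 1 - c₁ := by linarith
  have h1c₂ : (0:ℝ) < 1 - c₂ := by linarith
  -- key: for each x ∈ S, exp(a x) * c₂ * (1 - c₁) = exp(b x) * c₁ * (1 - c₂)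
  have key : ∀ x ∈ S,
      Real.exp (α₁ + ∑ i, β₁ i * x i) * (c₂ * (1 - c₁)) =
      Real.exp (α₂ + ∑ i, β₂ i * x i) * (c₁ * (1 - c₂)) := by
    intro x hx
    set A := Real.exp (α₁ + ∑ i, β₁ i * x i) with hA
    set B := Real.exp (α₂ + ∑ i, β₂ i * x i) with hB
    have hApos : 0 < A := Real.exp_pos _
    have hBpos : 0 < B := Real.exp_pos _
    have h1A : (0:ℝ) < 1 + A := by linarith
    have h1B : (0:ℝ) < 1 + B := by linarith
    have hca := hcase x hx
    have hco := hcontrol x hx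
    rw [phi, phi, logistic, logistic, ← hA, ← hB] at hca
    rw [phi, phi, one_sub_logistic, one_sub_logistic, ← hA, ← hB] at hco
    have hfx := hf x hx
    have hfx' := hf' x hx
    have hca' : A * f x * c₂ * (1 + B) = B * f' x * c₁ * (1 + A) := by
      field_simp [ne_of_gt h1A, ne_of_gt h1B, ne_of_gt hc₁0, ne_of_gt hc₂0] at hca
      linarith [hca]
    have hco' : f x * (1 - c₂) * (1 + B) = f' x * (1 - c₁) * (1 + A) := by
      field_simp [ne_of_gt h1A, ne_of_gt h1B, ne_of_gt h1c₁, ne_of_gt h1c₂] at hco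
      linarith [hco]
    have h1 : A * (c₂ * (1 - c₁)) * (f' x * (1 - c₁) * (1 + A))
        = B * (c₁ * (1 - c₂)) * (f' x * (1 - c₁) * (1 + A)) := by
      linear_combination (1 - c₁) * (1 - c₂) * hca' - A * c₂ * (1 - c₁) * hco'
    have hpos : f' x * (1 - c₁) * (1 + A) ≠ 0 :=
      ne_of_gt (mul_pos (mul_pos hfx' h1c₁) h1A)
    exact mul_right_cancel₀ hpos h1
  -- now the linear part (β₁ - β₂)ᵀ x is constant on S
  have hconst : ∀ x ∈ S, ∀ x' ∈ S,
      (∑ i, (β₁ - β₂) i * x i) = ∑ i, (β₁ - β₂) i * x' i := by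
    intro x hx x' hx'
    have k1 := key x hx
    have k2 := key x' hx'
    set E1 := Real.exp (α₁ + ∑ i, β₁ i * x i)
    set E2 := Real.exp (α₂ + ∑ i, β₂ i * x i)
    set E1' := Real.exp (α₁ + ∑ i, β₁ i * x' i)
    set E2' := Real.exp (α₂ + ∑ i, β₂ i * x' i)
    have hKne : (c₂ * (1 - c₁)) * (c₁ * (1 - c₂)) ≠ 0 :=
      ne_of_gt (mul_pos (mul_pos hc₂0 h1c₁) (mul_pos hc₁0 h1c₂))
    have h1 : (E1 * E2') * ((c₂ * (1 - c₁)) * (c₁ * (1 - c₂)))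
        = (E2 * E1') * ((c₂ * (1 - c₁)) * (c₁ * (1 - c₂))) := by
      have := congrArg₂ (· * ·) k1 k2
      linear_combination E2' * (c₁ * (1 - c₂)) * k1 - E2 * (c₁ * (1 - c₂)) * k2
    have hcross : E1 * E2' = E2 * E1' := mul_right_cancel₀ hKne h1
    rw [← Real.exp_add, ← Real.exp_add] at hcross
    have heq : (α₁ + ∑ i, β₁ i * x i) + (α₂ + ∑ i, β₂ i * x' i)
        = (α₂ + ∑ i, β₂ i * x i) + (α₁ + ∑ i, β₁ i * x' i) :=
      Real.exp_eq_exp.mp hcross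
    simp only [Pi.sub_apply, sub_mul, Finset.sum_sub_distrib]
    linarith [heq]
  have h0 : β₁ - β₂ = 0 := hS (β₁ - β₂) hconst
  funext i
  have := congrFun h0 i
  simp at this
  linarith [this]
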